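/- Let (X,d) be a metric space, δ ≥ 0, and let t₋₁, t₀ : [0,∞) → X be geodesic rays based at * such that all relevant triangles are δ-thin. Suppose T ≥ 0 satisfies d(t₋₁(T), t₀(T)) ≤ 3δ, and suppose m' ≥ 0 is a number such that there is a geodesic line l' and the ideal triangle (t₋₁, t₀, l') is δ-thin with internal points t₋₁(m'), t₀(m'), v ∈ l' (i.e. d(t₋₁(m'+j), l'(-j+t_v)) ≤ δ and d(t₀(m'+j), l'(j+t_v)) ≤ δ for all j ≥ 0, where v = l'(t_v)). If m' < T, then T - m' ≤ (5/2)δ; consequently m' ≥ T - 3δ. -/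
import Mathlib


/-- Let `t₋₁, t₀` be geodesic rays based at `*` with
`d(t₋₁(T), t₀(T)) ≤ 3δ`, and let `l'` be a geodesic line so that the ideal
triangle `(t₋₁, t₀, l')` is δ-thin with internal points `t₋₁(m'), t₀(m'),
v = l'(t_v)`. If `m' < T` then `T - m' ≤ (5/2)δ`; consequently `m' ≥ T - 3δ`. -/
theorem stmt16 {X : Type*} [MetricSpace X] (δ : ℝ) (hδ : 0 ≤ δ) (star : X)
    (tm1 t0 : ℝ → X) (htm1_0 : tm1 0 = star) (ht0_0 : t0 0 = star)
    (hray1 : ∀ s t : ℝ, 0 ≤ s → 0 ≤ t → dist (tm1 s) (tm1 t) = |s - t|)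
    (hray2 : ∀ s t : ℝ, 0 ≤ s → 0 ≤ t → dist (t0 s) (t0 t) = |s - t|)
    (l' : ℝ → X) (hl' : ∀ s t : ℝ, dist (l' s) (l' t) = |s - t|)
    (T : ℝ) (hT : 0 ≤ T) (hclose : dist (tm1 T) (t0 T) ≤ 3 * δ)
    (m' t_v : ℝ) (hm' : 0 ≤ m')
    (hthin1 : ∀ j : ℝ, 0 ≤ j → dist (tm1 (m' + j)) (l' (t_v - j)) ≤ δ)
    (hthin2 : ∀ j : ℝ, 0 ≤ j → dist (t0 (m' + j)) (l' (t_v + j)) ≤ δ) :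
    (m' < T → T - m' ≤ (5 / 2) * δ) ∧ T - 3 * δ ≤ m' := by
  have key : m' < T → T - m' ≤ (5 / 2) * δ := by
    intro hlt
    set k := T - m' with hk
    have hk0 : 0 ≤ k := by linarith
    have h1 := hthin1 k hk0
    have h2 := hthin2 k hk0
    have hmk : m' + k = T := by ring
    rw [hmk] at h1 h2
    have hll : dist (l' (t_v - k)) (l' (t_v + k)) = 2 * k := by
      rw [hl']
      rw [abs_of_nonpos (by linarith)]; ring
    have tri : dist (l' (t_v - k)) (l' (t_v + k)) ≤
        dist (l' (t_v - k)) (tm1 T) + dist (tm1 T) (t0 T) + dist (t0 T) (l' (t_v + k)) :=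
      dist_triangle4 _ _ _ _
    rw [dist_comm (l' (t_v - k)) (tm1 T)] at tri
    linarith [hll ▸ tri]
  refine ⟨key, ?_⟩
  rcases lt_or_ge m' T with h | h
  · linarith [key h]
  · linarith
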